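/- arXiv:1311.0423 — 4 statements merged into one kernel-verified Lean document; each statement's English description precedes it below -/
import Mathlib

section
/- Let q ≥ 3 and let ∇ ∈ ℝ^{p×n} be the discrete gradient operator of the 2-dimensional regular grid graph on V = {0,…,q−1}², with n = q² and p = 2q(q−1). Let ℓ be an integer with 4 < ℓ ≤ p and let m ∈ ℕ satisfy m ≥ 2n − (ℓ + √(2ℓ + 1) − 1). Then κ_∇(ℓ) ≤ m/2; that is, the number of measurements m meets the sufficient condition of the unknown-cosupport uniqueness criterion, so that under the assumptions of that criterion every ℓ-cosparse solution of the measurement equations is unique. -/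
/-- Base-`q` encoding of a grid point, used to orient the edges of the grid graph. -/
def enc (q d : ℕ) (v : Fin d → Fin q) : ℕ := ∑ i : Fin d, q ^ (i : ℕ) * (v i : ℕ)

/-- The (oriented) edges of the regular grid graph on `{0,…,q−1}^d`: pairs of vertices at
ℓ1-distance 1, canonically oriented. They index the rows of the discrete gradient. -/
abbrev OEdge (q d : ℕ) : Type :=
  {e : (Fin d → Fin q) × (Fin d → Fin q) //
    (∑ i, |(e.1 i : ℤ) - (e.2 i : ℤ)|) = 1 ∧ enc q d e.1 < enc q d e.2}

/-- The discrete gradient operator of the regular grid graph: one row per edge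
`e = (v₁, v₂)`, with entry `−1` in the column of `v₁`, `+1` in the column of `v₂`. -/
def grad (q d : ℕ) : Matrix (OEdge q d) (Fin d → Fin q) ℝ :=
  Matrix.of fun e v => if v = e.1.2 then 1 else if v = e.1.1 then -1 else 0

/-- `W_Λ`: the nullspace of the rows of the discrete gradient indexed by `Λ`. -/
noncomputable def Wgrad (q d : ℕ) (Λ : Finset (OEdge q d)) :
    Submodule ℝ ((Fin d → Fin q) → ℝ) :=
  ⨅ e ∈ Λ, LinearMap.ker
    ((LinearMap.proj e : (OEdge q d → ℝ) →ₗ[ℝ] ℝ) ∘ₗ (grad q d).mulVecLin)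

/-- `κ_∇(ℓ) = max{dim W_Λ : Λ ⊆ E, |Λ| ≥ ℓ}` for the discrete gradient of the grid. -/
noncomputable def kappaGrad (q d ℓ : ℕ) : ℕ :=
  (Finset.univ.filter (fun Λ : Finset (OEdge q d) => ℓ ≤ Λ.card)).sup
    (fun Λ => Module.finrank ℝ (Wgrad q d Λ))

namespace Stmt13Aux

/-- The relation on grid vertices generated by a set of oriented edges. -/
def gridRel (q : ℕ) (Λ : Finset (OEdge q 2)) (a b : Fin 2 → Fin q) : Prop :=
  ∃ e ∈ Λ, e.1.1 = a ∧ e.1.2 = b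

/-- The setoid on grid vertices generated by a set of oriented edges. -/
def gridSetoid (q : ℕ) (Λ : Finset (OEdge q 2)) : Setoid (Fin 2 → Fin q) :=
  Relation.EqvGen.setoid (gridRel q Λ)

lemma vert_ext {q : ℕ} {v w : Fin 2 → Fin q} (h0 : v 0 = w 0) (h1 : v 1 = w 1) : v = w :=
  funext (Fin.forall_fin_two.mpr ⟨h0, h1⟩)

/-- Structure of edges: they step by one either in coordinate 1 or in coordinate 0. -/
lemma edge_cases {q : ℕ} (e : OEdge q 2) :
    ((e.1.2 0 : ℕ) = (e.1.1 0 : ℕ) ∧ (e.1.2 1 : ℕ) = (e.1.1 1 : ℕ) + 1) ∨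
    ((e.1.2 1 : ℕ) = (e.1.1 1 : ℕ) ∧ (e.1.2 0 : ℕ) = (e.1.1 0 : ℕ) + 1) := by
  have hd := e.2.1
  have henc := e.2.2
  set a := e.1.1 with ha
  set b := e.1.2 with hb
  simp only [Fin.sum_univ_two] at hd
  simp only [enc, Fin.sum_univ_two, Fin.val_zero, Fin.val_one, pow_zero, pow_one, one_mul]
    at henc
  have hcases : ((a 1 : ℕ) = (b 1 : ℕ) ∧ ((a 0 : ℕ) = (b 0 : ℕ) + 1 ∨ (b 0 : ℕ) = (a 0 : ℕ) + 1))
      ∨ ((a 0 : ℕ) = (b 0 : ℕ) ∧ ((a 1 : ℕ) = (b 1 : ℕ) + 1 ∨ (b 1 : ℕ) = (a 1 : ℕ) + 1)) := by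
    rcases abs_cases ((a 0 : ℤ) - (b 0 : ℤ)) with ⟨h1, _⟩ | ⟨h1, _⟩ <;>
      rcases abs_cases ((a 1 : ℤ) - (b 1 : ℤ)) with ⟨h2, _⟩ | ⟨h2, _⟩ <;> omega
  rcases hcases with ⟨h1, h2⟩ | ⟨h1, h2⟩
  · right
    have h1' : (q : ℕ) * (a 1 : ℕ) = q * (b 1 : ℕ) := by rw [h1]
    rw [h1'] at henc
    have := Nat.lt_of_add_lt_add_right henc
    exact ⟨h1.symm, by omega⟩
  · left
    rw [h1] at henc
    have h3 : q * (a 1 : ℕ) < q * (b 1 : ℕ) := Nat.lt_of_add_lt_add_left henc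
    have := Nat.lt_of_mul_lt_mul_left h3
    exact ⟨h1.symm, by omega⟩

lemma edge_ne {q : ℕ} (e : OEdge q 2) : e.1.1 ≠ e.1.2 := by
  intro h
  have := e.2.2
  rw [h] at this
  exact lt_irrefl _ this

lemma sqrt_pair {x y : ℝ} (hx : 0 ≤ x) (hy : 0 ≤ y) :
    Real.sqrt (2 * (x + y) + 1) + 1 ≤ Real.sqrt (2 * x + 1) + Real.sqrt (2 * y + 1) := by
  set A := Real.sqrt (2 * x + 1) with hA
  set B := Real.sqrt (2 * y + 1) with hB
  have hA1 : 1 ≤ A := by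
    have : Real.sqrt 1 ≤ A := Real.sqrt_le_sqrt (by linarith)
    simpa using this
  have hB1 : 1 ≤ B := by
    have : Real.sqrt 1 ≤ B := Real.sqrt_le_sqrt (by linarith)
    simpa using this
  have hA2 : A ^ 2 = 2 * x + 1 := Real.sq_sqrt (by linarith)
  have hB2 : B ^ 2 = 2 * y + 1 := Real.sq_sqrt (by linarith)
  have key : 2 * (x + y) + 1 ≤ (A + B - 1) ^ 2 := by
    nlinarith [mul_nonneg (sub_nonneg.2 hA1) (sub_nonneg.2 hB1)]
  have h2 : Real.sqrt (2 * (x + y) + 1) ≤ A + B - 1 := by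
    calc Real.sqrt (2 * (x + y) + 1) ≤ Real.sqrt ((A + B - 1) ^ 2) := Real.sqrt_le_sqrt key
      _ = A + B - 1 := Real.sqrt_sq (by linarith)
  linarith

lemma sqrt_sum {ι : Type*} (s : Finset ι) (hs : s.Nonempty) (f : ι → ℕ) :
    Real.sqrt (2 * (∑ i ∈ s, (f i : ℝ)) + 1) + ((s.card : ℝ) - 1)
      ≤ ∑ i ∈ s, Real.sqrt (2 * (f i : ℝ) + 1) := by
  induction hs using Finset.Nonempty.cons_induction with
  | singleton a => simp
  | cons a s ha hs ih =>
    rw [Finset.sum_cons, Finset.sum_cons, Finset.card_cons]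
    have hpair := sqrt_pair (x := (f a : ℝ)) (y := ∑ i ∈ s, (f i : ℝ))
      (Nat.cast_nonneg _) (Finset.sum_nonneg fun i _ => Nat.cast_nonneg _)
    push_cast
    push_cast at ih
    linarith

lemma mulVec_grad_eq {q : ℕ} (e : OEdge q 2) (x : (Fin 2 → Fin q) → ℝ) :
    (grad q 2).mulVec x e = x e.1.2 - x e.1.1 := by
  have hne := edge_ne e
  simp only [Matrix.mulVec, dotProduct, grad, Matrix.of_apply]
  rw [Finset.sum_congr rfl
    (g := fun v => (if v = e.1.2 then x v else 0) + (if v = e.1.1 then -(x v) else 0))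
    (fun v _ => ?_)]
  · rw [Finset.sum_add_distrib, Finset.sum_ite_eq' Finset.univ e.1.2 x,
      Finset.sum_ite_eq' Finset.univ e.1.1 (fun v => -(x v))]
    simp [sub_eq_add_neg]
  · by_cases h2 : v = e.1.2
    · have h1 : v ≠ e.1.1 := fun h => hne (h.symm.trans h2)
      simp [h1, h2, Ne.symm hne]
    · by_cases h1 : v = e.1.1 <;> simp [h1, h2, hne]

lemma const_on_classes {q : ℕ} {Λ : Finset (OEdge q 2)} {x : (Fin 2 → Fin q) → ℝ}
    (hx : x ∈ Wgrad q 2 Λ) {a b : Fin 2 → Fin q} (h : Relation.EqvGen (gridRel q Λ) a b) :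
    x a = x b := by
  have hker : ∀ e ∈ Λ, x e.1.1 = x e.1.2 := by
    intro e he
    have hx' : ∀ e ∈ Λ, ((LinearMap.proj e : (OEdge q 2 → ℝ) →ₗ[ℝ] ℝ) ∘ₗ
        (grad q 2).mulVecLin) x = 0 := by
      simpa [Wgrad, Submodule.mem_iInf] using hx
    have h0 := hx' e he
    simp only [LinearMap.comp_apply, LinearMap.proj_apply, Matrix.mulVecLin_apply] at h0
    rw [mulVec_grad_eq e x] at h0
    linarith
  induction h with
  | rel a b hab =>
    obtain ⟨e, he, h1, h2⟩ := hab
    rw [← h1, ← h2]; exact hker e he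
  | refl a => rfl
  | symm a b _ ih => exact ih.symm
  | trans a b c _ _ ih1 ih2 => exact ih1.trans ih2

lemma finrank_Wgrad_le (q : ℕ) (Λ : Finset (OEdge q 2)) :
    Module.finrank ℝ (Wgrad q 2 Λ) ≤ Nat.card (Quotient (gridSetoid q Λ)) := by
  classical
  letI : Fintype (Quotient (gridSetoid q Λ)) :=
    @Quotient.fintype _ _ (gridSetoid q Λ) (fun _ _ => Classical.dec _)
  rw [Nat.card_eq_fintype_card]
  let Φ : ((Fin 2 → Fin q) → ℝ) →ₗ[ℝ] (Quotient (gridSetoid q Λ) → ℝ) :=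
    LinearMap.funLeft ℝ ℝ Quotient.out
  have hinj : Function.Injective (Φ ∘ₗ (Wgrad q 2 Λ).subtype) := by
    refine (injective_iff_map_eq_zero _).mpr ?_
    intro x hx0
    refine Subtype.ext (funext fun v => ?_)
    have hrel : Relation.EqvGen (gridRel q Λ)
        (Quotient.out (Quotient.mk (gridSetoid q Λ) v)) v :=
      @Quotient.mk_out _ (gridSetoid q Λ) v
    have hv : x.1 v = x.1 (Quotient.out (Quotient.mk (gridSetoid q Λ) v)) :=
      (const_on_classes x.2 hrel).symm
    have h0 : x.1 (Quotient.out (Quotient.mk (gridSetoid q Λ) v)) = 0 :=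
      congrFun hx0 (Quotient.mk (gridSetoid q Λ) v)
    simpa [hv] using h0
  have hle := LinearMap.finrank_le_finrank_of_injective hinj
  rwa [Module.finrank_fintype_fun_eq_card] at hle

lemma card_classes_le (q : ℕ) (hq : 0 < q) (Λ : Finset (OEdge q 2)) :
    2 * (Nat.card (Quotient (gridSetoid q Λ)) : ℝ) + (Λ.card : ℝ)
      + Real.sqrt (2 * (Λ.card : ℝ) + 1) - 1 ≤ 2 * (q : ℝ) ^ 2 := by
  classical
  letI : Fintype (Quotient (gridSetoid q Λ)) :=
    @Quotient.fintype _ _ (gridSetoid q Λ) (fun _ _ => Classical.dec _)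
  rw [Nat.card_eq_fintype_card]
  set Vz : Quotient (gridSetoid q Λ) → Finset (Fin 2 → Fin q) :=
    fun z => Finset.univ.filter (fun v => Quotient.mk (gridSetoid q Λ) v = z) with hVz
  set Λz : Quotient (gridSetoid q Λ) → Finset (OEdge q 2) :=
    fun z => Λ.filter (fun e => Quotient.mk (gridSetoid q Λ) e.1.1 = z) with hΛz
  have hVsum : ∑ z : Quotient (gridSetoid q Λ), (Vz z).card = q ^ 2 := by
    have h := Finset.card_eq_sum_card_fiberwise
      (f := fun v : Fin 2 → Fin q => Quotient.mk (gridSetoid q Λ) v)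
      (s := Finset.univ) (t := Finset.univ) (fun x _ => Finset.mem_univ _)
    rw [hVz]
    rw [← h, Finset.card_univ]
    simp [Fintype.card_fun]
  have hΛsum : ∑ z : Quotient (gridSetoid q Λ), (Λz z).card = Λ.card := by
    have h := Finset.card_eq_sum_card_fiberwise
      (f := fun e : OEdge q 2 => Quotient.mk (gridSetoid q Λ) e.1.1)
      (s := Λ) (t := Finset.univ) (fun x _ => Finset.mem_univ _)
    rw [hΛz, ← h]
  have key : ∀ z : Quotient (gridSetoid q Λ),
      ((Λz z).card : ℝ) + Real.sqrt (2 * ((Λz z).card : ℝ) + 1) + 1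
        ≤ 2 * ((Vz z).card : ℝ) := by
    intro z
    have hzV : Quotient.out z ∈ Vz z := by
      simp only [hVz, Finset.mem_filter, Finset.mem_univ, true_and]
      exact Quotient.out_eq z
    have hVne : (Vz z).Nonempty := ⟨_, hzV⟩
    have hend : ∀ e ∈ Λz z, e.1.1 ∈ Vz z ∧ e.1.2 ∈ Vz z := by
      intro e he
      rw [hΛz, Finset.mem_filter] at he
      obtain ⟨heΛ, heq⟩ := he
      have hrel : Quotient.mk (gridSetoid q Λ) e.1.2 = Quotient.mk (gridSetoid q Λ) e.1.1 :=
        (Quotient.sound (Relation.EqvGen.rel _ _ ⟨e, heΛ, rfl, rfl⟩)).symm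
      constructor <;> simp only [hVz, Finset.mem_filter, Finset.mem_univ, true_and]
      · exact heq
      · rw [hrel]; exact heq
    set R := (Vz z).image (fun v => v 1) with hR
    set C := (Vz z).image (fun v => v 0) with hC
    have hR1 : 1 ≤ R.card := Finset.card_pos.mpr (hVne.image _)
    have hC1 : 1 ≤ C.card := Finset.card_pos.mpr (hVne.image _)
    have hk : (Vz z).card ≤ R.card * C.card := by
      have hsub : (Vz z).card ≤ (R ×ˢ C).card := by
        apply Finset.card_le_card_of_injOn (fun v => (v 1, v 0))
        · intro v hv
          exact Finset.mem_product.mpr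
            ⟨Finset.mem_image_of_mem _ hv, Finset.mem_image_of_mem _ hv⟩
        · intro v _ w _ h
          exact vert_ext (congrArg Prod.snd h) (congrArg Prod.fst h)
      simpa [Finset.card_product] using hsub
    set H := (Λz z).filter (fun e => e.1.1 1 = e.1.2 1) with hHdef
    set K := (Λz z).filter (fun e => ¬ e.1.1 1 = e.1.2 1) with hKdef
    have hHK : H.card + K.card = (Λz z).card :=
      Finset.card_filter_add_card_filter_not _
    have hHfact : ∀ e ∈ H, ((e : OEdge q 2).1.2 1 : ℕ) = ((e : OEdge q 2).1.1 1 : ℕ)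
        ∧ ((e : OEdge q 2).1.2 0 : ℕ) = ((e : OEdge q 2).1.1 0 : ℕ) + 1 := by
      intro e he
      rw [hHdef, Finset.mem_filter] at he
      rcases edge_cases e with ⟨h1, h2⟩ | h
      · exfalso
        have : ((e : OEdge q 2).1.1 1 : ℕ) = ((e : OEdge q 2).1.2 1 : ℕ) :=
          congrArg Fin.val he.2
        omega
      · exact h
    have hKfact : ∀ e ∈ K, ((e : OEdge q 2).1.2 0 : ℕ) = ((e : OEdge q 2).1.1 0 : ℕ)
        ∧ ((e : OEdge q 2).1.2 1 : ℕ) = ((e : OEdge q 2).1.1 1 : ℕ) + 1 := by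
      intro e he
      rw [hKdef, Finset.mem_filter] at he
      rcases edge_cases e with h | ⟨h1, h2⟩
      · exact h
      · exact absurd (Fin.ext h1.symm) he.2
    -- horizontal count
    set M := (Vz z).filter (fun v => ∀ w ∈ Vz z, w 1 = v 1 → w 0 ≤ v 0) with hMdef
    have hRM : R.card ≤ M.card := by
      have hsub : R ⊆ M.image (fun v => v 1) := by
        intro y hy
        obtain ⟨v, hv, hvy⟩ := Finset.mem_image.mp hy
        obtain ⟨u, hu, hmax⟩ := Finset.exists_max_image
          ((Vz z).filter (fun w => w 1 = y)) (fun v => v 0)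
          ⟨v, Finset.mem_filter.mpr ⟨hv, hvy⟩⟩
        rw [Finset.mem_filter] at hu
        refine Finset.mem_image.mpr ⟨u, ?_, hu.2⟩
        rw [hMdef, Finset.mem_filter]
        exact ⟨hu.1, fun w hw hw1 => hmax w (Finset.mem_filter.mpr ⟨hw, hw1.trans hu.2⟩)⟩
      calc R.card ≤ (M.image (fun v => v 1)).card := Finset.card_le_card hsub
        _ ≤ M.card := Finset.card_image_le
    have himgH : (H.image (fun e => (e : OEdge q 2).1.1)).card = H.card := by
      apply Finset.card_image_of_injOn
      intro e he f hf hef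
      obtain ⟨he1, he2⟩ := hHfact e he
      obtain ⟨hf1, hf2⟩ := hHfact f hf
      have hef' : (e : OEdge q 2).1.1 = (f : OEdge q 2).1.1 := hef
      refine Subtype.ext (Prod.ext hef' (vert_ext ?_ ?_))
      · exact Fin.ext (by rw [he2, hf2, hef'])
      · exact Fin.ext (by rw [he1, hf1, hef'])
    have hdisjH : Disjoint (H.image (fun e => (e : OEdge q 2).1.1)) M := by
      rw [Finset.disjoint_left]
      intro v hv hvM
      obtain ⟨e, he, hev⟩ := Finset.mem_image.mp hv
      obtain ⟨he1, he2⟩ := hHfact e he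
      have heΛz : e ∈ Λz z := by
        rw [hHdef, Finset.mem_filter] at he; exact he.1
      have h2V : (e : OEdge q 2).1.2 ∈ Vz z := (hend e heΛz).2
      rw [hMdef, Finset.mem_filter] at hvM
      have hle := hvM.2 _ h2V (by rw [← hev]; exact Fin.ext he1)
      rw [← hev] at hle
      have hle' : ((e : OEdge q 2).1.2 0 : ℕ) ≤ ((e : OEdge q 2).1.1 0 : ℕ) :=
        Fin.le_def.mp hle
      omega
    have hHcount : H.card + R.card ≤ (Vz z).card := by
      have hsub : (H.image (fun e => (e : OEdge q 2).1.1)) ∪ M ⊆ Vz z := by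
        intro v hv
        rcases Finset.mem_union.mp hv with hv | hv
        · obtain ⟨e, he, hev⟩ := Finset.mem_image.mp hv
          have heΛz : e ∈ Λz z := by
            rw [hHdef, Finset.mem_filter] at he; exact he.1
          exact hev ▸ (hend e heΛz).1
        · rw [hMdef] at hv; exact Finset.mem_of_mem_filter _ hv
      have h1 := Finset.card_le_card hsub
      rw [Finset.card_union_of_disjoint hdisjH, himgH] at h1
      omega
    -- vertical count
    set M' := (Vz z).filter (fun v => ∀ w ∈ Vz z, w 0 = v 0 → w 1 ≤ v 1) with hM'def
    have hCM : C.card ≤ M'.card := by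
      have hsub : C ⊆ M'.image (fun v => v 0) := by
        intro y hy
        obtain ⟨v, hv, hvy⟩ := Finset.mem_image.mp hy
        obtain ⟨u, hu, hmax⟩ := Finset.exists_max_image
          ((Vz z).filter (fun w => w 0 = y)) (fun v => v 1)
          ⟨v, Finset.mem_filter.mpr ⟨hv, hvy⟩⟩
        rw [Finset.mem_filter] at hu
        refine Finset.mem_image.mpr ⟨u, ?_, hu.2⟩
        rw [hM'def, Finset.mem_filter]
        exact ⟨hu.1, fun w hw hw1 => hmax w (Finset.mem_filter.mpr ⟨hw, hw1.trans hu.2⟩)⟩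
      calc C.card ≤ (M'.image (fun v => v 0)).card := Finset.card_le_card hsub
        _ ≤ M'.card := Finset.card_image_le
    have himgK : (K.image (fun e => (e : OEdge q 2).1.1)).card = K.card := by
      apply Finset.card_image_of_injOn
      intro e he f hf hef
      obtain ⟨he1, he2⟩ := hKfact e he
      obtain ⟨hf1, hf2⟩ := hKfact f hf
      have hef' : (e : OEdge q 2).1.1 = (f : OEdge q 2).1.1 := hef
      refine Subtype.ext (Prod.ext hef' (vert_ext ?_ ?_))
      · exact Fin.ext (by rw [he1, hf1, hef'])
      · exact Fin.ext (by rw [he2, hf2, hef'])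
    have hdisjK : Disjoint (K.image (fun e => (e : OEdge q 2).1.1)) M' := by
      rw [Finset.disjoint_left]
      intro v hv hvM
      obtain ⟨e, he, hev⟩ := Finset.mem_image.mp hv
      obtain ⟨he1, he2⟩ := hKfact e he
      have heΛz : e ∈ Λz z := by
        rw [hKdef, Finset.mem_filter] at he; exact he.1
      have h2V : (e : OEdge q 2).1.2 ∈ Vz z := (hend e heΛz).2
      rw [hM'def, Finset.mem_filter] at hvM
      have hle := hvM.2 _ h2V (by rw [← hev]; exact Fin.ext he1)
      rw [← hev] at hle
      have hle' : ((e : OEdge q 2).1.2 1 : ℕ) ≤ ((e : OEdge q 2).1.1 1 : ℕ) :=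
        Fin.le_def.mp hle
      omega
    have hKcount : K.card + C.card ≤ (Vz z).card := by
      have hsub : (K.image (fun e => (e : OEdge q 2).1.1)) ∪ M' ⊆ Vz z := by
        intro v hv
        rcases Finset.mem_union.mp hv with hv | hv
        · obtain ⟨e, he, hev⟩ := Finset.mem_image.mp hv
          have heΛz : e ∈ Λz z := by
            rw [hKdef, Finset.mem_filter] at he; exact he.1
          exact hev ▸ (hend e heΛz).1
        · rw [hM'def] at hv; exact Finset.mem_of_mem_filter _ hv
      have h1 := Finset.card_le_card hsub
      rw [Finset.card_union_of_disjoint hdisjK, himgK] at h1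
      omega
    -- numeric conclusion
    have hcount : (Λz z).card + R.card + C.card ≤ 2 * (Vz z).card := by omega
    have hkRC : ((Vz z).card : ℝ) ≤ (R.card : ℝ) * (C.card : ℝ) := by exact_mod_cast hk
    have h1 : ((Λz z).card : ℝ) + (R.card : ℝ) + (C.card : ℝ) ≤ 2 * ((Vz z).card : ℝ) := by
      exact_mod_cast hcount
    have hr1 : (1 : ℝ) ≤ (R.card : ℝ) := by exact_mod_cast hR1
    have hc1 : (1 : ℝ) ≤ (C.card : ℝ) := by exact_mod_cast hC1
    have hsq : 2 * ((Λz z).card : ℝ) + 1 ≤ ((R.card : ℝ) + (C.card : ℝ) - 1) ^ 2 := by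
      nlinarith [sq_nonneg ((R.card : ℝ) - (C.card : ℝ))]
    have h2 : Real.sqrt (2 * ((Λz z).card : ℝ) + 1) ≤ (R.card : ℝ) + (C.card : ℝ) - 1 := by
      calc Real.sqrt (2 * ((Λz z).card : ℝ) + 1)
          ≤ Real.sqrt (((R.card : ℝ) + (C.card : ℝ) - 1) ^ 2) := Real.sqrt_le_sqrt hsq
        _ = (R.card : ℝ) + (C.card : ℝ) - 1 := Real.sqrt_sq (by linarith)
    linarith
  -- sum the per-class bounds
  have hsum := Finset.sum_le_sum (fun z (_ : z ∈ Finset.univ) => key z)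
  have hΛcast : (∑ z : Quotient (gridSetoid q Λ), ((Λz z).card : ℝ)) = (Λ.card : ℝ) := by
    rw [← hΛsum, Nat.cast_sum]
  have hVcast : (∑ z : Quotient (gridSetoid q Λ), 2 * ((Vz z).card : ℝ)) = 2 * (q : ℝ) ^ 2 := by
    rw [← Finset.mul_sum, ← Nat.cast_sum, hVsum]
    push_cast
    ring
  have hne : (Finset.univ : Finset (Quotient (gridSetoid q Λ))).Nonempty :=
    ⟨Quotient.mk (gridSetoid q Λ) (fun _ => ⟨0, hq⟩), Finset.mem_univ _⟩
  have hsqrt := sqrt_sum Finset.univ hne (fun z => (Λz z).card)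
  rw [hΛcast] at hsqrt
  have hsplit : ∑ z : Quotient (gridSetoid q Λ),
      (((Λz z).card : ℝ) + Real.sqrt (2 * ((Λz z).card : ℝ) + 1) + 1)
      = (∑ z : Quotient (gridSetoid q Λ), ((Λz z).card : ℝ))
        + (∑ z : Quotient (gridSetoid q Λ), Real.sqrt (2 * ((Λz z).card : ℝ) + 1))
        + ((Finset.univ : Finset (Quotient (gridSetoid q Λ))).card : ℝ) := by
    rw [Finset.sum_add_distrib, Finset.sum_add_distrib, Finset.sum_const, nsmul_eq_mul, mul_one]
  rw [hsplit, hΛcast, hVcast] at hsum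
  rw [Finset.card_univ] at hsum hsqrt
  linarith

end Stmt13Aux

/-- 2D, unknown cosupport: if `m ≥ 2n − (ℓ + √(2ℓ + 1) − 1)` with `n = q²`, then
`κ_∇(ℓ) ≤ m/2`, i.e. `m` measurements meet the sufficient condition of the
unknown-cosupport uniqueness criterion. -/
theorem stmt_13 (q : ℕ) (hq : 3 ≤ q) (ℓ : ℕ) (hl : 4 < ℓ) (hlp : ℓ ≤ 2 * q * (q - 1))
    (m : ℕ)
    (hm : (m : ℝ) ≥ 2 * (q : ℝ) ^ 2 - ((ℓ : ℝ) + Real.sqrt (2 * (ℓ : ℝ) + 1) - 1)) :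
    (kappaGrad q 2 ℓ : ℝ) ≤ (m : ℝ) / 2 := by
  have hq0 : 0 < q := by omega
  have key : ∀ Λ : Finset (OEdge q 2), ℓ ≤ Λ.card →
      (Module.finrank ℝ (Wgrad q 2 Λ) : ℝ) ≤ (m : ℝ) / 2 := by
    intro Λ hcard
    have h1 : (Module.finrank ℝ (Wgrad q 2 Λ) : ℝ)
        ≤ (Nat.card (Quotient (Stmt13Aux.gridSetoid q Λ)) : ℝ) := by
      exact_mod_cast Stmt13Aux.finrank_Wgrad_le q Λ
    have h2 := Stmt13Aux.card_classes_le q hq0 Λ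
    have h4 : (ℓ : ℝ) ≤ (Λ.card : ℝ) := by exact_mod_cast hcard
    have h3 : Real.sqrt (2 * (ℓ : ℝ) + 1) ≤ Real.sqrt (2 * (Λ.card : ℝ) + 1) :=
      Real.sqrt_le_sqrt (by linarith)
    linarith
  rw [kappaGrad]
  by_cases hne : (Finset.univ.filter (fun Λ : Finset (OEdge q 2) => ℓ ≤ Λ.card)).Nonempty
  · obtain ⟨Λ₀, hΛ₀, hsup⟩ := Finset.exists_mem_eq_sup _ hne
      (fun Λ => Module.finrank ℝ (Wgrad q 2 Λ))
    rw [hsup]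
    exact key Λ₀ (Finset.mem_filter.mp hΛ₀).2
  · rw [Finset.not_nonempty_iff_eq_empty.mp hne, Finset.sup_empty]
    have hb : ((⊥ : ℕ) : ℝ) = 0 := by norm_num [Nat.bot_eq_zero]
    rw [hb]
    positivity
end

section
/- Let q ≥ 3 and let ∇ ∈ ℝ^{p×n} be the discrete gradient operator of the 3-dimensional regular grid graph on V = {0,…,q−1}³, with n = q³ and p = 3q²(q−1). Let ℓ be an integer with 54 < ℓ ≤ p and let m ∈ ℕ satisfy m ≥ 2n − (2/3)(ℓ + (3ℓ²)^{1/3} + 2(ℓ/3)^{1/3} − 2). Then κ_∇(ℓ) ≤ m/2; that is, the number of measurements m meets the sufficient condition of the unknown-cosupport uniqueness criterion. -/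
namespace Stmt14


abbrev GV (q : ℕ) := Fin 3 → Fin q

lemma edge_ne {q : ℕ} (e : OEdge q 3) : e.1.1 ≠ e.1.2 := by
  intro h
  have := e.2.2
  rw [h] at this
  exact lt_irrefl _ this

def gridG {q : ℕ} (Λ : Finset (OEdge q 3)) : SimpleGraph (GV q) where
  Adj v w := v ≠ w ∧ ∃ e ∈ Λ, (e.1.1 = v ∧ e.1.2 = w) ∨ (e.1.1 = w ∧ e.1.2 = v)
  symm := ⟨by
    rintro v w ⟨hne, e, he, h⟩
    exact ⟨hne.symm, e, he, h.symm⟩⟩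
  loopless := ⟨fun v h => h.1 rfl⟩

lemma mem_Wgrad {q : ℕ} {Λ : Finset (OEdge q 3)} {u : GV q → ℝ} :
    u ∈ Wgrad q 3 Λ ↔ ∀ e ∈ Λ, u e.1.2 = u e.1.1 := by
  classical
  simp only [Wgrad, Submodule.mem_iInf, LinearMap.mem_ker, LinearMap.comp_apply,
    Matrix.mulVecLin_apply, LinearMap.proj_apply]
  refine forall_congr' fun e => forall_congr' fun he => ?_
  have hrow : (grad q 3).mulVec u e = u e.1.2 - u e.1.1 := by
    have hab : e.1.1 ≠ e.1.2 := edge_ne e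
    simp only [Matrix.mulVec, dotProduct, grad, Matrix.of_apply]
    have : ∀ v : GV q, (if v = e.1.2 then (1:ℝ) else if v = e.1.1 then -1 else 0) * u v
        = (if v = e.1.2 then u v else 0) + (if v = e.1.1 then -u v else 0) := by
      intro v
      by_cases h1 : v = e.1.2 <;> by_cases h2 : v = e.1.1 <;>
        simp [h1, h2] <;> subst_vars <;> simp_all
    rw [Finset.sum_congr rfl fun v _ => this v, Finset.sum_add_distrib]
    rw [Finset.sum_ite_eq' Finset.univ e.1.2 (fun v => u v),
      Finset.sum_ite_eq' Finset.univ e.1.1 (fun v => -u v)]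
    simp [sub_eq_add_neg]
  rw [hrow]
  constructor
  · intro h; linarith
  · intro h; rw [h]; ring

lemma const_on_comp {q : ℕ} {Λ : Finset (OEdge q 3)} {u : GV q → ℝ}
    (hu : u ∈ Wgrad q 3 Λ) {v w : GV q}
    (h : (gridG Λ).connectedComponentMk v = (gridG Λ).connectedComponentMk w) :
    u v = u w := by
  rw [SimpleGraph.ConnectedComponent.eq] at h
  obtain ⟨p⟩ := h
  induction p with
  | nil => rfl
  | cons hadj p ih =>
    refine Eq.trans ?_ ih
    obtain ⟨hne, e, he, hcase⟩ := hadj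
    have := mem_Wgrad.mp hu e he
    rcases hcase with ⟨h1, h2⟩ | ⟨h1, h2⟩
    · rw [← h1, ← h2]; exact this.symm
    · rw [← h1, ← h2]; exact this

lemma finrank_Wgrad_le {q : ℕ} (Λ : Finset (OEdge q 3)) :
    Module.finrank ℝ (Wgrad q 3 Λ) ≤ Nat.card (gridG Λ).ConnectedComponent := by
  classical
  haveI : Finite ((gridG Λ).ConnectedComponent) := Quot.finite _
  haveI : Fintype ((gridG Λ).ConnectedComponent) := Fintype.ofFinite _
  set C := (gridG Λ).ConnectedComponent
  let Φ : ((GV q) → ℝ) →ₗ[ℝ] (C → ℝ) :=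
    LinearMap.pi fun c => LinearMap.proj c.out
  have hinj : Function.Injective (Φ.comp (Wgrad q 3 Λ).subtype) := by
    rw [← LinearMap.ker_eq_bot, LinearMap.ker_eq_bot']
    rintro ⟨u, hu⟩ h0
    ext v
    have h1 : u ((gridG Λ).connectedComponentMk v).out = 0 := by
      have := congrFun h0 ((gridG Λ).connectedComponentMk v)
      simpa [Φ] using this
    have h2 : u v = u ((gridG Λ).connectedComponentMk v).out := by
      refine const_on_comp hu ?_
      exact ((gridG Λ).connectedComponentMk v).out_eq.symm
    simp [h2, h1]
  calc Module.finrank ℝ (Wgrad q 3 Λ) ≤ Module.finrank ℝ (C → ℝ) :=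
        LinearMap.finrank_le_finrank_of_injective hinj
    _ = Fintype.card C := Module.finrank_fintype_fun_eq_card ℝ
    _ = Nat.card C := (Nat.card_eq_fintype_card).symm





lemma edge_cases {q : ℕ} (e : OEdge q 3) :
    ∃ (i : Fin 3) (a b : GV q), (∀ j, j ≠ i → a j = b j) ∧ ((b i : ℕ) = (a i : ℕ) + 1) ∧
      ((e.1.1 = a ∧ e.1.2 = b) ∨ (e.1.1 = b ∧ e.1.2 = a)) := by
  obtain ⟨h1, _⟩ := e.2
  set u := e.1.1
  set v := e.1.2
  rw [Fin.sum_univ_three] at h1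
  have habs : ∀ i : Fin 3, 0 ≤ |(u i : ℤ) - (v i : ℤ)| := fun i => abs_nonneg _
  have h0 := habs 0; have h1' := habs 1; have h2 := habs 2
  -- exactly one coordinate differs, by 1
  have key : ∃ i : Fin 3, |(u i : ℤ) - (v i : ℤ)| = 1 ∧ ∀ j, j ≠ i → (u j : ℤ) = (v j : ℤ) := by
    have hj3 : ∀ j : Fin 3, j = 0 ∨ j = 1 ∨ j = 2 := by decide
    rcases (by omega : (|(u 0 : ℤ) - v 0| = 1 ∧ |(u 1 : ℤ) - v 1| = 0 ∧ |(u 2 : ℤ) - v 2| = 0)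
        ∨ (|(u 0 : ℤ) - v 0| = 0 ∧ |(u 1 : ℤ) - v 1| = 1 ∧ |(u 2 : ℤ) - v 2| = 0)
        ∨ (|(u 0 : ℤ) - v 0| = 0 ∧ |(u 1 : ℤ) - v 1| = 0 ∧ |(u 2 : ℤ) - v 2| = 1)) with
      ⟨ha, hb, hc⟩ | ⟨ha, hb, hc⟩ | ⟨ha, hb, hc⟩
    · rw [abs_eq_zero, sub_eq_zero] at hb hc
      exact ⟨0, ha, fun j hj => by rcases hj3 j with h|h|h <;> subst h <;> simp_all⟩
    · rw [abs_eq_zero, sub_eq_zero] at ha hc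
      exact ⟨1, hb, fun j hj => by rcases hj3 j with h|h|h <;> subst h <;> simp_all⟩
    · rw [abs_eq_zero, sub_eq_zero] at ha hb
      exact ⟨2, hc, fun j hj => by rcases hj3 j with h|h|h <;> subst h <;> simp_all⟩
  obtain ⟨i, hi, hoff⟩ := key
  have hcoord : ∀ j, j ≠ i → u j = v j := by
    intro j hj
    have := hoff j hj
    exact Fin.ext (by exact_mod_cast this)
  rcases abs_eq (by norm_num : (0:ℤ) ≤ 1) |>.mp hi with hgt | hlt
  · -- u i = v i + 1 : lower is v
    refine ⟨i, v, u, fun j hj => (hcoord j hj).symm, ?_, Or.inr ⟨rfl, rfl⟩⟩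
    have : (u i : ℤ) = (v i : ℤ) + 1 := by linarith
    exact_mod_cast this
  · -- v i = u i + 1 : lower is u
    refine ⟨i, u, v, hcoord, ?_, Or.inl ⟨rfl, rfl⟩⟩
    have : (v i : ℤ) = (u i : ℤ) + 1 := by linarith
    exact_mod_cast this

noncomputable def eDir {q : ℕ} (e : OEdge q 3) : Fin 3 := (edge_cases e).choose
noncomputable def eLo {q : ℕ} (e : OEdge q 3) : GV q :=
  (edge_cases e).choose_spec.choose
noncomputable def eUp {q : ℕ} (e : OEdge q 3) : GV q :=
  (edge_cases e).choose_spec.choose_spec.choose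

lemma eSpec {q : ℕ} (e : OEdge q 3) :
    (∀ j, j ≠ eDir e → eLo e j = eUp e j) ∧ ((eUp e (eDir e) : ℕ) = (eLo e (eDir e) : ℕ) + 1) ∧
      ((e.1.1 = eLo e ∧ e.1.2 = eUp e) ∨ (e.1.1 = eUp e ∧ e.1.2 = eLo e)) :=
  (edge_cases e).choose_spec.choose_spec.choose_spec

lemma eInj {q : ℕ} (e e' : OEdge q 3) (hdir : eDir e = eDir e') (hlo : eLo e = eLo e') :
    e = e' := by
  obtain ⟨hoff, hstep, hor⟩ := eSpec e
  obtain ⟨hoff', hstep', hor'⟩ := eSpec e'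
  have hup : eUp e = eUp e' := by
    funext j
    by_cases hj : j = eDir e
    · subst hj
      have h2' : (eUp e' (eDir e) : ℕ) = (eLo e' (eDir e) : ℕ) + 1 := by rw [hdir]; exact hstep'
      have h1' : (eUp e (eDir e) : ℕ) = (eLo e' (eDir e) : ℕ) + 1 := by rw [hstep, hlo]
      exact Fin.ext (h1'.trans h2'.symm)
    · rw [← hoff j hj, hlo, hoff' j (by rw [← hdir]; exact hj)]
  rcases hor with ⟨p1, p2⟩ | ⟨p1, p2⟩ <;> rcases hor' with ⟨p1', p2'⟩ | ⟨p1', p2'⟩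
  · apply Subtype.ext; apply Prod.ext <;> simp [p1, p2, p1', p2', hlo, hup]
  · exfalso
    have l1 := e.2.2; have l2 := e'.2.2
    rw [p1, p2] at l1; rw [p1', p2'] at l2
    rw [hlo, hup] at l1
    exact lt_asymm l1 l2
  · exfalso
    have l1 := e.2.2; have l2 := e'.2.2
    rw [p1, p2] at l1; rw [p1', p2'] at l2
    rw [hlo, hup] at l1
    exact lt_asymm l1 l2
  · apply Subtype.ext; apply Prod.ext <;> simp [p1, p2, p1', p2', hlo, hup]

def Lset {q : ℕ} (i : Fin 3) (T : Finset (GV q)) : Finset (GV q) :=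
  T.filter (fun v => ∃ w ∈ T, (∀ j, j ≠ i → v j = w j) ∧ (w i : ℕ) = (v i : ℕ) + 1)

lemma edges_le_Lsum {q : ℕ} (F : Finset (OEdge q 3)) (T : Finset (GV q))
    (hend : ∀ e ∈ F, e.1.1 ∈ T ∧ e.1.2 ∈ T) :
    F.card ≤ ∑ i : Fin 3, (Lset i T).card := by
  classical
  rw [Finset.card_eq_sum_card_fiberwise (f := eDir) (t := Finset.univ)
    (fun e _ => Finset.mem_univ _)]
  refine Finset.sum_le_sum fun i _ => ?_
  refine Finset.card_le_card_of_injOn eLo ?_ ?_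
  · intro e he
    rw [Finset.mem_coe, Finset.mem_filter] at he
    obtain ⟨heF, hei⟩ := he
    obtain ⟨hoff, hstep, hor⟩ := eSpec e
    have hmem : eLo e ∈ T ∧ eUp e ∈ T := by
      obtain ⟨h1, h2⟩ := hend e heF
      rcases hor with ⟨p1, p2⟩ | ⟨p1, p2⟩
      · exact ⟨p1 ▸ h1, p2 ▸ h2⟩
      · exact ⟨p2 ▸ h2, p1 ▸ h1⟩
    rw [Finset.mem_coe, Lset, Finset.mem_filter]
    exact ⟨hmem.1, eUp e, hmem.2, by rw [← hei]; exact hoff, by rw [← hei]; exact hstep⟩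
  · intro e he e' he' hlo
    rw [Finset.coe_filter, Set.mem_setOf_eq] at he he'
    exact eInj e e' (he.2.trans he'.2.symm) hlo





def shdw {q : ℕ} [NeZero q] (i : Fin 3) (T : Finset (GV q)) : Finset (GV q) :=
  T.image (fun v => Function.update v i 0)

lemma Lset_card_le {q : ℕ} [NeZero q] (i : Fin 3) (T : Finset (GV q)) :
    (Lset i T).card + (shdw i T).card ≤ T.card := by
  classical
  have hLsub : Lset i T ⊆ T := Finset.filter_subset _ _
  have hcT : T.card = ∑ p ∈ shdw i T, (T.filter (fun v => Function.update v i 0 = p)).card :=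
    Finset.card_eq_sum_card_fiberwise (fun v hv => Finset.mem_image_of_mem _ hv)
  have hcL : (Lset i T).card
      = ∑ p ∈ shdw i T, ((Lset i T).filter (fun v => Function.update v i 0 = p)).card :=
    Finset.card_eq_sum_card_fiberwise (fun v hv => Finset.mem_image_of_mem _ (hLsub hv))
  rw [hcT, hcL, Finset.card_eq_sum_ones (shdw i T), ← Finset.sum_add_distrib]
  refine Finset.sum_le_sum fun p hp => ?_
  set Tp := T.filter (fun v => Function.update v i 0 = p) with hTp
  set Lp := (Lset i T).filter (fun v => Function.update v i 0 = p) with hLp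
  have hTpne : Tp.Nonempty := by
    rw [shdw, Finset.mem_image] at hp
    obtain ⟨v, hv, hvp⟩ := hp
    exact ⟨v, Finset.mem_filter.mpr ⟨hv, hvp⟩⟩
  obtain ⟨mx, hmx, hmax⟩ := Tp.exists_max_image (fun v => (v i : ℕ)) hTpne
  have hmxp : Function.update mx i 0 = p := (Finset.mem_filter.mp hmx).2
  have hmxnL : mx ∉ Lp := by
    intro hmem
    obtain ⟨hmL, -⟩ := Finset.mem_filter.mp hmem
    obtain ⟨-, w, hwT, hoff, hstep⟩ := Finset.mem_filter.mp hmL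
    have hwTp : w ∈ Tp := by
      refine Finset.mem_filter.mpr ⟨hwT, ?_⟩
      rw [← hmxp]
      funext j
      by_cases hj : j = i
      · subst hj; simp [Function.update]
      · simp [Function.update, hj, (hoff j hj).symm]
    have := hmax w hwTp
    omega
  have hsub : Lp ⊆ Tp := by
    intro v hv
    obtain ⟨hvL, hvp⟩ := Finset.mem_filter.mp hv
    exact Finset.mem_filter.mpr ⟨hLsub hvL, hvp⟩
  have hss : Lp ⊂ Tp := Finset.ssubset_iff_of_subset hsub |>.mpr ⟨mx, hmx, hmxnL⟩
  have := Finset.card_lt_card hss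
  omega

lemma loomis_whitney {q : ℕ} [NeZero q] (T : Finset (GV q)) :
    ((T.card : ℝ))^2 ≤ ((shdw 0 T).card : ℝ) * ((shdw 1 T).card : ℝ) * ((shdw 2 T).card : ℝ) := by
  classical
  have hs0 : (0:ℝ) ≤ ((shdw 0 T).card : ℝ) := Nat.cast_nonneg _
  have hs1 : (0:ℝ) ≤ ((shdw 1 T).card : ℝ) := Nat.cast_nonneg _
  have hs2 : (0:ℝ) ≤ ((shdw 2 T).card : ℝ) := Nat.cast_nonneg _
  let A : Fin q → Finset (GV q) := fun t => T.filter (fun v => v 0 = t)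
  let B : Fin q → Finset (GV q) := fun t => (shdw 1 T).filter (fun v => v 0 = t)
  let C : Fin q → Finset (GV q) := fun t => (shdw 2 T).filter (fun v => v 0 = t)
  have hTsum : T.card = ∑ t : Fin q, (A t).card :=
    Finset.card_eq_sum_card_fiberwise (fun v _ => Finset.mem_univ _)
  have hBsum : ∑ t : Fin q, (B t).card = (shdw 1 T).card :=
    (Finset.card_eq_sum_card_fiberwise (fun v _ => Finset.mem_univ _)).symm
  have hCsum : ∑ t : Fin q, (C t).card = (shdw 2 T).card :=
    (Finset.card_eq_sum_card_fiberwise (fun v _ => Finset.mem_univ _)).symm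
  have hA0 : ∀ t, (A t).card ≤ (shdw 0 T).card := by
    intro t
    refine Finset.card_le_card_of_injOn (fun v => Function.update v 0 0) ?_ ?_
    · intro v hv
      exact Finset.mem_image_of_mem _ (Finset.mem_filter.mp hv).1
    · intro v hv w hw h
      have hv' : v ∈ T.filter (fun v => v 0 = t) := Finset.mem_coe.mp hv
      have hw' : w ∈ T.filter (fun v => v 0 = t) := Finset.mem_coe.mp hw
      have hv0 : v 0 = t := (Finset.mem_filter.mp hv').2
      have hw0 : w 0 = t := (Finset.mem_filter.mp hw').2
      funext j
      by_cases hj : j = (0 : Fin 3)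
      · subst hj; rw [hv0, hw0]
      · have := congrFun h j
        simpa [Function.update, hj] using this
  have hABC : ∀ t, (A t).card ≤ (B t).card * (C t).card := by
    intro t
    have hmaps : ∀ v ∈ A t, (Function.update v 1 0, Function.update v 2 0) ∈ (B t) ×ˢ (C t) := by
      intro v hv
      obtain ⟨hvT, hv0⟩ := Finset.mem_filter.mp hv
      refine Finset.mem_product.mpr ⟨Finset.mem_filter.mpr ⟨Finset.mem_image_of_mem _ hvT, ?_⟩,
        Finset.mem_filter.mpr ⟨Finset.mem_image_of_mem _ hvT, ?_⟩⟩
      · simpa [Function.update] using hv0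
      · simpa [Function.update] using hv0
    have hinj : Set.InjOn (fun v => (Function.update v 1 0, Function.update v 2 0)) ((A t : Finset (GV q)) : Set (GV q)) := by
      intro v hv w hw h
      have h1 := congrArg Prod.fst h
      have h2 := congrArg Prod.snd h
      simp only at h1 h2
      have hv0 : v 0 = t := (Finset.mem_filter.mp (Finset.mem_coe.mp hv)).2
      have hw0 : w 0 = t := (Finset.mem_filter.mp (Finset.mem_coe.mp hw)).2
      funext j
      have hj3 : j = 0 ∨ j = 1 ∨ j = 2 := by omega
      rcases hj3 with hj | hj | hj <;> subst hj
      · rw [hv0, hw0]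
      · have := congrFun h2 1
        simpa [Function.update] using this
      · have := congrFun h1 2
        simpa [Function.update] using this
    calc (A t).card ≤ ((B t) ×ˢ (C t)).card := Finset.card_le_card_of_injOn _ hmaps hinj
      _ = (B t).card * (C t).card := Finset.card_product _ _
  -- real chain
  have key : (T.card : ℝ) ≤ Real.sqrt ((shdw 0 T).card) *
      (Real.sqrt ((shdw 1 T).card) * Real.sqrt ((shdw 2 T).card)) := by
    have step1 : (T.card : ℝ) ≤ Real.sqrt ((shdw 0 T).card) *
        ∑ t : Fin q, Real.sqrt ((B t).card) * Real.sqrt ((C t).card) := by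
      rw [hTsum]
      push_cast
      rw [Finset.mul_sum]
      refine Finset.sum_le_sum fun t _ => ?_
      have h1 : ((A t).card : ℝ) ≤ ((shdw 0 T).card : ℝ) := Nat.cast_le.mpr (hA0 t)
      have h2 : ((A t).card : ℝ) ≤ ((B t).card : ℝ) * ((C t).card : ℝ) := by
        rw [← Nat.cast_mul]; exact Nat.cast_le.mpr (hABC t)
      have ha : (0:ℝ) ≤ ((A t).card : ℝ) := Nat.cast_nonneg _
      calc ((A t).card : ℝ) = Real.sqrt (((A t).card : ℝ)^2) := (Real.sqrt_sq ha).symm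
        _ ≤ Real.sqrt (((shdw 0 T).card : ℝ) * (((B t).card : ℝ) * ((C t).card : ℝ))) := by
            apply Real.sqrt_le_sqrt; nlinarith
        _ = Real.sqrt ((shdw 0 T).card) * Real.sqrt (((B t).card : ℝ) * ((C t).card : ℝ)) :=
            Real.sqrt_mul hs0 _
        _ = Real.sqrt ((shdw 0 T).card) * (Real.sqrt ((B t).card) * Real.sqrt ((C t).card)) := by
            rw [Real.sqrt_mul (Nat.cast_nonneg _)]
    refine step1.trans ?_
    have hcs := Real.sum_sqrt_mul_sqrt_le (Finset.univ : Finset (Fin q))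
      (f := fun t => ((B t).card : ℝ)) (g := fun t => ((C t).card : ℝ))
      (fun t => Nat.cast_nonneg _) (fun t => Nat.cast_nonneg _)
    have hb' : (∑ t : Fin q, ((B t).card:ℝ)) = ((shdw 1 T).card : ℝ) := by
      rw [← Nat.cast_sum]; exact Nat.cast_inj.mpr hBsum
    have hc' : (∑ t : Fin q, ((C t).card:ℝ)) = ((shdw 2 T).card : ℝ) := by
      rw [← Nat.cast_sum]; exact Nat.cast_inj.mpr hCsum
    rw [hb', hc'] at hcs
    exact mul_le_mul_of_nonneg_left hcs (Real.sqrt_nonneg _)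
  have hTn : (0:ℝ) ≤ (T.card : ℝ) := Nat.cast_nonneg _
  have hsq := mul_le_mul key key hTn (by positivity)
  have e0 := Real.mul_self_sqrt hs0
  have e1 := Real.mul_self_sqrt hs1
  have e2 := Real.mul_self_sqrt hs2
  calc ((T.card:ℝ))^2 = (T.card:ℝ) * (T.card:ℝ) := by ring
    _ ≤ (Real.sqrt ((shdw 0 T).card) * (Real.sqrt ((shdw 1 T).card) * Real.sqrt ((shdw 2 T).card)))
        * (Real.sqrt ((shdw 0 T).card) * (Real.sqrt ((shdw 1 T).card) *
          Real.sqrt ((shdw 2 T).card))) := hsq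
    _ = (Real.sqrt ((shdw 0 T).card) * Real.sqrt ((shdw 0 T).card)) *
        ((Real.sqrt ((shdw 1 T).card) * Real.sqrt ((shdw 1 T).card)) *
         (Real.sqrt ((shdw 2 T).card) * Real.sqrt ((shdw 2 T).card))) := by ring
    _ = ((shdw 0 T).card : ℝ) * ((shdw 1 T).card : ℝ) * ((shdw 2 T).card : ℝ) := by
        rw [e0, e1, e2]; ring



lemma cuberoot_cube {x : ℝ} (hx : 0 ≤ x) : (x ^ ((1:ℝ)/3)) ^ (3:ℕ) = x := by
  rw [← Real.rpow_natCast (x ^ ((1:ℝ)/3)) 3, ← Real.rpow_mul hx]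
  norm_num

lemma cuberoot_nonneg {x : ℝ} (hx : 0 ≤ x) : 0 ≤ x ^ ((1:ℝ)/3) := Real.rpow_nonneg hx _

lemma pow23_eq {x : ℝ} (hx : 0 ≤ x) : x ^ ((2:ℝ)/3) = (x ^ (2:ℕ)) ^ ((1:ℝ)/3) := by
  rw [← Real.rpow_natCast x 2, ← Real.rpow_mul hx]
  norm_num

lemma pow23_sq {x : ℝ} (hx : 0 ≤ x) : x ^ ((2:ℝ)/3) = (x ^ ((1:ℝ)/3)) ^ (2:ℕ) := by
  rw [← Real.rpow_natCast (x ^ ((1:ℝ)/3)) 2, ← Real.rpow_mul hx]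
  norm_num

lemma one_le_cuberoot {x : ℝ} (hx : 1 ≤ x) : 1 ≤ x ^ ((1:ℝ)/3) :=
  Real.one_le_rpow hx (by norm_num)

lemma cube_inj {a b : ℝ} (ha : 0 ≤ a) (hb : 0 ≤ b) (h : a^(3:ℕ) = b^(3:ℕ)) : a = b :=
  le_antisymm (le_of_pow_le_pow_left₀ (by norm_num) hb h.le)
    (le_of_pow_le_pow_left₀ (by norm_num) ha h.ge)

lemma amgm3 {k s0 s1 s2 : ℝ} (hk : 0 ≤ k) (h0 : 0 ≤ s0) (h1 : 0 ≤ s1) (h2 : 0 ≤ s2)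
    (h : k^(2:ℕ) ≤ s0 * s1 * s2) : 3 * k ^ ((2:ℝ)/3) ≤ s0 + s1 + s2 := by
  have hgeom := Real.geom_mean_le_arith_mean3_weighted (by norm_num : (0:ℝ) ≤ 1/3)
    (by norm_num : (0:ℝ) ≤ 1/3) (by norm_num : (0:ℝ) ≤ 1/3) h0 h1 h2 (by norm_num)
  have hk23 : k ^ ((2:ℝ)/3) ≤ s0 ^ ((1:ℝ)/3) * s1 ^ ((1:ℝ)/3) * s2 ^ ((1:ℝ)/3) := by
    rw [pow23_eq hk]
    calc (k ^ (2:ℕ)) ^ ((1:ℝ)/3) ≤ (s0 * s1 * s2) ^ ((1:ℝ)/3) :=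
          Real.rpow_le_rpow (by positivity) h (by norm_num)
      _ = s0 ^ ((1:ℝ)/3) * s1 ^ ((1:ℝ)/3) * s2 ^ ((1:ℝ)/3) := by
          rw [Real.mul_rpow (by positivity) h2, Real.mul_rpow h0 h1]
  nlinarith [hk23, hgeom]

lemma poly_ineq (a b : ℝ) (ha : 1 ≤ a) (hb : 1 ≤ b) :
    (a^3 + b^3 - 1)^2 ≤ (a^2 + b^2 - 1)^3 := by
  nlinarith [mul_nonneg (mul_nonneg (sq_nonneg (a*b)) (sq_nonneg (a-b))) (sq_nonneg 1),
    sq_nonneg (a-b), sq_nonneg (a+b), mul_nonneg (sub_nonneg.2 ha) (sub_nonneg.2 hb),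
    sq_nonneg (a*b - 1), sq_nonneg (a - 1), sq_nonneg (b-1),
    mul_nonneg (mul_nonneg (sub_nonneg.2 ha) (sub_nonneg.2 hb)) (sq_nonneg (a-b)),
    mul_nonneg (mul_nonneg (mul_nonneg (sub_nonneg.2 ha) (sub_nonneg.2 ha)) (sub_nonneg.2 hb)) (sub_nonneg.2 hb)]

lemma cube_ineq (x y : ℝ) (hx : 0 ≤ x) (hy : 1 ≤ y) (h : x^3 ≤ y^3 - y^2) :
    3*x^2 + 2*x + 1 ≤ 3*y^2 := by
  have hy0 : (0:ℝ) ≤ y := le_trans zero_le_one hy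
  have hxy : x ≤ y := by
    have h3 : x^3 ≤ y^3 := by nlinarith [sq_nonneg y]
    exact le_of_pow_le_pow_left₀ (by norm_num) hy0 h3
  have h1 : 0 ≤ y^3 - y^2 - x^3 := by linarith
  have hpos : 0 < x^2 + x*y + y^2 := by nlinarith [sq_nonneg x, mul_nonneg hx hy0]
  have key : (3*y^2 - (3*x^2 + 2*x + 1)) * (x^2 + x*y + y^2) =
      (3*(x+y)+3) * (y^3 - y^2 - x^3) + (x*(y-x)^2 + (2*y+x)*(y-x)) := by ring
  have h2 : 0 ≤ (3*y^2 - (3*x^2 + 2*x + 1)) * (x^2 + x*y + y^2) := by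
    rw [key]
    have := mul_nonneg (by linarith : (0:ℝ) ≤ 3*(x+y)+3) h1
    have := mul_nonneg hx (sq_nonneg (y-x))
    have := mul_nonneg (by linarith : (0:ℝ) ≤ 2*y+x) (sub_nonneg.2 hxy)
    linarith
  nlinarith [h2, hpos]

lemma phi_superadd {a b : ℝ} (ha : 1 ≤ a) (hb : 1 ≤ b) :
    (3*a - 3*a^((2:ℝ)/3)) + (3*b - 3*b^((2:ℝ)/3)) ≤
      3*(a+b-1) - 3*(a+b-1)^((2:ℝ)/3) := by
  have ha0 : (0:ℝ) ≤ a := by linarith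
  have hb0 : (0:ℝ) ≤ b := by linarith
  have hab0 : (0:ℝ) ≤ a + b - 1 := by linarith
  have hα1 : 1 ≤ a ^ ((1:ℝ)/3) := one_le_cuberoot ha
  have hβ1 : 1 ≤ b ^ ((1:ℝ)/3) := one_le_cuberoot hb
  have hγ0 : 0 ≤ (a+b-1) ^ ((1:ℝ)/3) := cuberoot_nonneg hab0
  have hα3 : (a ^ ((1:ℝ)/3)) ^ (3:ℕ) = a := cuberoot_cube ha0
  have hβ3 : (b ^ ((1:ℝ)/3)) ^ (3:ℕ) = b := cuberoot_cube hb0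
  have hγ3 : ((a+b-1) ^ ((1:ℝ)/3)) ^ (3:ℕ) = a + b - 1 := cuberoot_cube hab0
  have hpoly : ((a ^ ((1:ℝ)/3))^3 + (b ^ ((1:ℝ)/3))^3 - 1)^2 ≤
      ((a ^ ((1:ℝ)/3))^2 + (b ^ ((1:ℝ)/3))^2 - 1)^3 := poly_ineq _ _ hα1 hβ1
  have hγ2 : ((a+b-1) ^ ((1:ℝ)/3))^(2:ℕ) ≤ (a ^ ((1:ℝ)/3))^2 + (b ^ ((1:ℝ)/3))^2 - 1 := by
    have hc : (((a+b-1) ^ ((1:ℝ)/3))^(2:ℕ))^(3:ℕ) ≤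
        ((a ^ ((1:ℝ)/3))^2 + (b ^ ((1:ℝ)/3))^2 - 1)^(3:ℕ) := by
      have heq : (((a+b-1) ^ ((1:ℝ)/3))^(2:ℕ))^(3:ℕ) =
          (((a+b-1) ^ ((1:ℝ)/3))^(3:ℕ))^(2:ℕ) := by ring
      rw [heq, hγ3]
      calc (a+b-1)^(2:ℕ) = ((a ^ ((1:ℝ)/3))^3 + (b ^ ((1:ℝ)/3))^3 - 1)^2 := by
            rw [hα3, hβ3]
        _ ≤ _ := hpoly
    have hrhs : (0:ℝ) ≤ (a ^ ((1:ℝ)/3))^2 + (b ^ ((1:ℝ)/3))^2 - 1 := by nlinarith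
    exact le_of_pow_le_pow_left₀ (by norm_num) hrhs hc
  have e1 : a^((2:ℝ)/3) = (a ^ ((1:ℝ)/3))^(2:ℕ) := pow23_sq ha0
  have e2 : b^((2:ℝ)/3) = (b ^ ((1:ℝ)/3))^(2:ℕ) := pow23_sq hb0
  have e3 : (a+b-1)^((2:ℝ)/3) = ((a+b-1) ^ ((1:ℝ)/3))^(2:ℕ) := pow23_sq hab0
  rw [e1, e2, e3]
  have h1 : 3*a = 3*(a ^ ((1:ℝ)/3))^(3:ℕ) := by rw [hα3]
  have h2 : 3*b = 3*(b ^ ((1:ℝ)/3))^(3:ℕ) := by rw [hβ3]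
  nlinarith [hγ2]

lemma sum_phi_le {ι : Type*} (s : Finset ι) (hs : s.Nonempty) (k : ι → ℝ)
    (hk : ∀ i ∈ s, 1 ≤ k i) :
    ∑ i ∈ s, (3 * k i - 3 * (k i) ^ ((2:ℝ)/3)) ≤
      3 * (1 + ∑ i ∈ s, (k i - 1)) - 3 * (1 + ∑ i ∈ s, (k i - 1)) ^ ((2:ℝ)/3) := by
  classical
  revert hs hk
  induction s using Finset.induction_on with
  | empty => intro hs; exact absurd hs (by simp)
  | @insert a s ha ih =>
    intro _ hk
    by_cases hse : s.Nonempty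
    · rw [Finset.sum_insert ha, Finset.sum_insert ha]
      have hki : 1 ≤ k a := hk a (Finset.mem_insert_self _ _)
      have hrest : ∀ j ∈ s, 1 ≤ k j := fun j hj => hk j (Finset.mem_insert_of_mem hj)
      have hb1 : 1 ≤ 1 + ∑ j ∈ s, (k j - 1) := by
        have : (0:ℝ) ≤ ∑ j ∈ s, (k j - 1) :=
          Finset.sum_nonneg fun j hj => by linarith [hrest j hj]
        linarith
      have hstep := phi_superadd hki hb1
      have heq : k a + (1 + ∑ j ∈ s, (k j - 1)) - 1 = 1 + (k a - 1 + ∑ j ∈ s, (k j - 1)) := by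
        ring
      rw [heq] at hstep
      linarith [ih hse hrest]
    · have hempty : s = ∅ := Finset.not_nonempty_iff_eq_empty.mp hse
      subst hempty
      simp only [Finset.sum_insert (Finset.notMem_empty a), Finset.sum_empty, add_zero]
      have : 1 + (k a - 1) = k a := by ring
      rw [this]

lemma final_ineq {K L : ℝ} (hK : 1 ≤ K) (hL : 0 ≤ L)
    (h : L ≤ 3 * K - 3 * K ^ ((2:ℝ)/3)) :
    L + (3 * L^(2:ℕ)) ^ ((1:ℝ)/3) + 2 * (L/3) ^ ((1:ℝ)/3) + 1 ≤ 3 * K := by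
  have hK0 : (0:ℝ) ≤ K := by linarith
  have hx0 : 0 ≤ (L/3) ^ ((1:ℝ)/3) := cuberoot_nonneg (by linarith)
  have hy1 : 1 ≤ K ^ ((1:ℝ)/3) := one_le_cuberoot hK
  have hx3 : ((L/3) ^ ((1:ℝ)/3)) ^ (3:ℕ) = L / 3 := cuberoot_cube (by linarith)
  have hy3 : (K ^ ((1:ℝ)/3)) ^ (3:ℕ) = K := cuberoot_cube hK0
  have hy2 : K ^ ((2:ℝ)/3) = (K ^ ((1:ℝ)/3)) ^ (2:ℕ) := pow23_sq hK0
  have hA : (3 * L^(2:ℕ)) ^ ((1:ℝ)/3) = 3 * ((L/3) ^ ((1:ℝ)/3))^(2:ℕ) := by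
    refine cube_inj (cuberoot_nonneg (by positivity)) (by positivity) ?_
    rw [cuberoot_cube (by positivity : (0:ℝ) ≤ 3 * L^(2:ℕ))]
    have : (3 * ((L/3) ^ ((1:ℝ)/3))^(2:ℕ)) ^ (3:ℕ) =
        27 * (((L/3) ^ ((1:ℝ)/3))^(3:ℕ))^(2:ℕ) := by ring
    rw [this, hx3]
    ring
  rw [hA]
  have hle : ((L/3) ^ ((1:ℝ)/3))^3 ≤ (K ^ ((1:ℝ)/3))^3 - (K ^ ((1:ℝ)/3))^2 := by
    rw [hx3, hy3, ← hy2]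
    linarith
  have hmain := cube_ineq _ _ hx0 hy1 hle
  have hKy : 3 * K = 3 * (K ^ ((1:ℝ)/3))^3 := by rw [hy3]
  have hLx : L = 3 * ((L/3) ^ ((1:ℝ)/3))^3 := by rw [hx3]; ring
  rw [hy2] at h
  nlinarith [hmain, h]


lemma T_bound {q : ℕ} [NeZero q] (F : Finset (OEdge q 3)) (T : Finset (GV q))
    (hend : ∀ e ∈ F, e.1.1 ∈ T ∧ e.1.2 ∈ T) :
    (F.card : ℝ) ≤ 3 * T.card - 3 * (T.card : ℝ) ^ ((2:ℝ)/3) := by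
  have h1 := edges_le_Lsum F T hend
  have h2 : ∀ i : Fin 3, (Lset i T).card + (shdw i T).card ≤ T.card := fun i => Lset_card_le i T
  have hLW := loomis_whitney T
  have hAM := amgm3 (Nat.cast_nonneg T.card) (Nat.cast_nonneg (shdw 0 T).card)
    (Nat.cast_nonneg (shdw 1 T).card) (Nat.cast_nonneg (shdw 2 T).card) hLW
  have h1' : (F.card : ℝ) ≤ ((Lset 0 T).card : ℝ) + ((Lset 1 T).card : ℝ)
      + ((Lset 2 T).card : ℝ) := by
    have := h1
    rw [Fin.sum_univ_three] at this
    exact_mod_cast this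
  have h20 := h2 0; have h21 := h2 1; have h22 := h2 2
  have c20 : ((Lset 0 T).card : ℝ) + ((shdw 0 T).card : ℝ) ≤ (T.card : ℝ) := by exact_mod_cast h20
  have c21 : ((Lset 1 T).card : ℝ) + ((shdw 1 T).card : ℝ) ≤ (T.card : ℝ) := by exact_mod_cast h21
  have c22 : ((Lset 2 T).card : ℝ) + ((shdw 2 T).card : ℝ) ≤ (T.card : ℝ) := by exact_mod_cast h22
  linarith

lemma components_bound {q : ℕ} (hq3 : 3 ≤ q) (ℓ : ℕ) (Λ : Finset (OEdge q 3))
    (hΛ : ℓ ≤ Λ.card) :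
    (ℓ:ℝ) + (3*(ℓ:ℝ)^(2:ℕ))^((1:ℝ)/3) + 2*((ℓ:ℝ)/3)^((1:ℝ)/3) + 1 ≤
      3*((q:ℝ)^3 - (Nat.card (gridG Λ).ConnectedComponent : ℝ) + 1) := by
  classical
  haveI : NeZero q := ⟨by omega⟩
  haveI : Finite ((gridG Λ).ConnectedComponent) := Quot.finite _
  haveI : Fintype ((gridG Λ).ConnectedComponent) := Fintype.ofFinite _
  haveI : Nonempty (GV q) := ⟨fun _ => ⟨0, by omega⟩⟩
  set G := gridG Λ with hG
  set C := G.ConnectedComponent with hC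
  let S : C → Finset (GV q) := fun c => Finset.univ.filter (fun v => G.connectedComponentMk v = c)
  let k : C → ℕ := fun c => (S c).card
  have hVcard : (Finset.univ : Finset (GV q)).card = q ^ 3 := by
    simp [Finset.card_univ]
  have hn : ∑ c : C, k c = q ^ 3 := by
    rw [← hVcard]
    exact (Finset.card_eq_sum_card_fiberwise (fun v _ => Finset.mem_univ _)).symm
  have hk1 : ∀ c : C, 1 ≤ k c := by
    intro c
    have : c.out ∈ S c := Finset.mem_filter.mpr ⟨Finset.mem_univ _, c.out_eq⟩
    exact Finset.card_pos.mpr ⟨c.out, this⟩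
  let Ec : C → Finset (OEdge q 3) := fun c => Λ.filter (fun e => G.connectedComponentMk e.1.1 = c)
  have hEc : Λ.card = ∑ c : C, (Ec c).card :=
    Finset.card_eq_sum_card_fiberwise (fun e _ => Finset.mem_univ _)
  have hend : ∀ c : C, ∀ e ∈ Ec c, e.1.1 ∈ S c ∧ e.1.2 ∈ S c := by
    intro c e he
    obtain ⟨heΛ, he1⟩ := Finset.mem_filter.mp he
    have hadj : G.Adj e.1.1 e.1.2 := ⟨edge_ne e, e, heΛ, Or.inl ⟨rfl, rfl⟩⟩
    have he2 : G.connectedComponentMk e.1.2 = c := by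
      rw [← SimpleGraph.ConnectedComponent.connectedComponentMk_eq_of_adj hadj]
      exact he1
    exact ⟨Finset.mem_filter.mpr ⟨Finset.mem_univ _, he1⟩,
      Finset.mem_filter.mpr ⟨Finset.mem_univ _, he2⟩⟩
  have hcomp : ∀ c : C, ((Ec c).card : ℝ) ≤ 3 * (k c : ℝ) - 3 * ((k c : ℝ)) ^ ((2:ℝ)/3) :=
    fun c => T_bound (Ec c) (S c) (hend c)
  have huniv : (Finset.univ : Finset C).Nonempty := Finset.univ_nonempty
  have hsum := sum_phi_le (Finset.univ : Finset C) huniv (fun c => (k c : ℝ))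
    (fun c _ => by exact_mod_cast hk1 c)
  have hchain : (ℓ : ℝ) ≤ 3 * (1 + ∑ c : C, ((k c : ℝ) - 1)) -
      3 * (1 + ∑ c : C, ((k c : ℝ) - 1)) ^ ((2:ℝ)/3) := by
    calc (ℓ : ℝ) ≤ (Λ.card : ℝ) := Nat.cast_le.mpr hΛ
      _ = ∑ c : C, ((Ec c).card : ℝ) := by rw [hEc]; push_cast; rfl
      _ ≤ ∑ c : C, (3 * (k c : ℝ) - 3 * ((k c : ℝ)) ^ ((2:ℝ)/3)) :=
          Finset.sum_le_sum fun c _ => hcomp c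
      _ ≤ _ := hsum
  have hKval : 1 + ∑ c : C, ((k c : ℝ) - 1) =
      (q:ℝ)^3 - (Nat.card C : ℝ) + 1 := by
    rw [Finset.sum_sub_distrib]
    have h1 : ∑ c : C, ((k c : ℝ)) = (q:ℝ)^3 := by
      rw [← Nat.cast_sum]
      exact_mod_cast congrArg Nat.cast hn
    have h2 : ∑ _c : C, (1:ℝ) = (Nat.card C : ℝ) := by
      simp [Finset.card_univ, Nat.card_eq_fintype_card]
    rw [h1, h2]
    ring
  have hK1 : 1 ≤ 1 + ∑ c : C, ((k c : ℝ) - 1) := by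
    have : (0:ℝ) ≤ ∑ c : C, ((k c : ℝ) - 1) :=
      Finset.sum_nonneg fun c _ => by
        have := hk1 c
        have : (1:ℝ) ≤ (k c : ℝ) := by exact_mod_cast this
        linarith
    linarith
  have := final_ineq hK1 (Nat.cast_nonneg ℓ) hchain
  rw [hKval] at this
  exact this

end Stmt14

/-- 3D, unknown cosupport: if `m ≥ 2n − (2/3)(ℓ + (3ℓ²)^{1/3} + 2(ℓ/3)^{1/3} − 2)` with
`n = q³`, then `κ_∇(ℓ) ≤ m/2`, i.e. `m` measurements meet the sufficient condition of the
unknown-cosupport uniqueness criterion. -/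
theorem stmt_14 (q : ℕ) (hq : 3 ≤ q) (ℓ : ℕ) (hl : 54 < ℓ) (hlp : ℓ ≤ 3 * q ^ 2 * (q - 1))
    (m : ℕ)
    (hm : (m : ℝ) ≥ 2 * (q : ℝ) ^ 3 - (2 / 3) * ((ℓ : ℝ) + (3 * (ℓ : ℝ) ^ 2) ^ ((1 : ℝ) / 3) +
      2 * ((ℓ : ℝ) / 3) ^ ((1 : ℝ) / 3) - 2)) :
    (kappaGrad q 3 ℓ : ℝ) ≤ (m : ℝ) / 2 := by
  classical
  rcases Finset.eq_empty_or_nonempty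
    (Finset.univ.filter (fun Λ : Finset (OEdge q 3) => ℓ ≤ Λ.card)) with hF | hF
  · rw [kappaGrad, hF]
    simp only [Finset.sup_empty, Nat.bot_eq_zero, Nat.cast_zero]
    positivity
  · obtain ⟨Λ, hΛF, hsup⟩ := Finset.exists_mem_eq_sup _ hF
      (fun Λ : Finset (OEdge q 3) => Module.finrank ℝ (Wgrad q 3 Λ))
    have hΛ : ℓ ≤ Λ.card := (Finset.mem_filter.mp hΛF).2
    have hb1 : Module.finrank ℝ (Wgrad q 3 Λ) ≤
        Nat.card (Stmt14.gridG Λ).ConnectedComponent := Stmt14.finrank_Wgrad_le Λ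
    have hb2 := Stmt14.components_bound hq ℓ Λ hΛ
    have hk : (kappaGrad q 3 ℓ : ℝ) = (Module.finrank ℝ (Wgrad q 3 Λ) : ℝ) := by
      rw [kappaGrad, hsup]
    rw [hk]
    have hcast : ((Module.finrank ℝ (Wgrad q 3 Λ)) : ℝ) ≤
        ((Nat.card (Stmt14.gridG Λ).ConnectedComponent : ℕ) : ℝ) := Nat.cast_le.mpr hb1
    have hpow : (3*(ℓ:ℝ)^(2:ℕ))^((1:ℝ)/3) = (3 * (ℓ : ℝ) ^ 2) ^ ((1 : ℝ) / 3) := by norm_num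
    rw [hpow] at hb2
    linarith
end

section
/- Let M ∈ ℝ^{r×N}, q ∈ ℝ^r, c ∈ ℝ^N, and let w̄ be a solution of the linear program minimize ⟨c, w⟩ subject to Mw = q and w ≥ 0 (componentwise). Set J = {i ∈ [N] : w̄_i = 0}. Then the following are equivalent: (i) w̄ is the unique solution of the linear program; (ii) there exists no w ∈ ℝ^N with Mw = 0, w_i ≥ 0 for all i ∈ J, ⟨c, w⟩ ≤ 0, and w ≠ 0. -/
/-- Mangasarian's uniqueness criterion for linear programs: a solution `w̄` of
`min ⟨c, w⟩ s.t. Mw = q, w ≥ 0` is unique iff there is no `w ≠ 0` with `Mw = 0`,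
`w_i ≥ 0` for all `i` with `w̄_i = 0`, and `⟨c, w⟩ ≤ 0`. -/
theorem stmt_16 (r N : ℕ) (M : Matrix (Fin r) (Fin N) ℝ) (q : Fin r → ℝ) (c : Fin N → ℝ)
    (wbar : Fin N → ℝ) (hfeas : M.mulVec wbar = q) (hpos : ∀ i, 0 ≤ wbar i)
    (hopt : ∀ w : Fin N → ℝ, M.mulVec w = q → (∀ i, 0 ≤ w i) →
      dotProduct c wbar ≤ dotProduct c w) :
    (∀ w : Fin N → ℝ, M.mulVec w = q → (∀ i, 0 ≤ w i) →
        dotProduct c w ≤ dotProduct c wbar → w = wbar) ↔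
    ¬ ∃ w : Fin N → ℝ, M.mulVec w = 0 ∧ (∀ i, wbar i = 0 → 0 ≤ w i) ∧
        dotProduct c w ≤ 0 ∧ w ≠ 0 := by
  constructor
  · rintro huniq ⟨w, hw0, hwJ, hwc, hwne⟩
    -- find a small ε > 0 so that wbar + ε • w is nonnegative
    have hε : ∃ ε : ℝ, 0 < ε ∧ ∀ i, 0 ≤ wbar i + ε * w i := by
      rcases isEmpty_or_nonempty (Fin N) with h | h
      · exact ⟨1, one_pos, fun i => (h.false i).elim⟩
      · set f : Fin N → ℝ := fun i => if w i < 0 then wbar i / (-w i) else 1 with hf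
        have hne : (Finset.univ : Finset (Fin N)).Nonempty := Finset.univ_nonempty
        set ε := min 1 (Finset.univ.inf' hne f) with hεdef
        have hfpos : ∀ i, 0 < f i := by
          intro i
          by_cases hwi : w i < 0
          · have hwbar : 0 < wbar i := by
              rcases lt_or_eq_of_le (hpos i) with h' | h'
              · exact h'
              · exact absurd (hwJ i h'.symm) (not_le.mpr hwi)
            simp only [hf, if_pos hwi]
            exact div_pos hwbar (by linarith)
          · simp [hf, hwi]
        have hεpos : 0 < ε := lt_min one_pos ((Finset.lt_inf'_iff hne).mpr
          (fun i _ => hfpos i))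
        refine ⟨ε, hεpos, fun i => ?_⟩
        by_cases hwi : w i < 0
        · have h1 : ε ≤ f i := le_trans (min_le_right _ _)
            (Finset.inf'_le f (Finset.mem_univ i))
          have h2 : f i = wbar i / (-w i) := if_pos hwi
          have h3 : ε * (-w i) ≤ wbar i := by
            rw [h2] at h1
            have := (le_div_iff₀ (by linarith : (0:ℝ) < -w i)).mp h1
            linarith
          linarith
        · push_neg at hwi
          have := mul_nonneg hεpos.le hwi
          have := hpos i
          linarith
    obtain ⟨ε, hεpos, hεnn⟩ := hε
    have hfeas' : M.mulVec (wbar + ε • w) = q := by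
      rw [Matrix.mulVec_add, Matrix.mulVec_smul, hw0, hfeas]
      simp
    have hcost : dotProduct c (wbar + ε • w) ≤ dotProduct c wbar := by
      rw [dotProduct_add, dotProduct_smul]
      have : ε * dotProduct c w ≤ 0 :=
        mul_nonpos_of_nonneg_of_nonpos hεpos.le hwc
      simpa [smul_eq_mul] using by linarith
    have heq := huniq (wbar + ε • w) hfeas' (fun i => by simpa using hεnn i) hcost
    have : ε • w = 0 := by
      have := congrArg (fun v => v - wbar) heq
      simpa using this
    have : w = 0 := by
      have h := smul_eq_zero.mp this
      rcases h with h | h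
      · exact absurd h hεpos.ne'
      · exact h
    exact hwne this
  · intro hno w hwfeas hwpos hwcost
    by_contra hne
    apply hno
    refine ⟨w - wbar, ?_, ?_, ?_, ?_⟩
    · rw [Matrix.mulVec_sub, hwfeas, hfeas, sub_self]
    · intro i hi
      have := hwpos i
      simp [hi]
      linarith
    · rw [dotProduct_sub]
      linarith
    · intro h
      exact hne (by rwa [sub_eq_zero] at h)
end

section
/- Let A ∈ ℝ^{m×n}, B ∈ ℝ^{p×n}, b ∈ ℝ^m, and let ū ∈ ℝ^n be a solution of the problem minimize ‖Bu‖₁ subject to Au = b, u ≥ 0, such that ū_i > 0 for every i ∈ [n]. Let Λ ⊆ [p] be the cosupport of ū with respect to B. Then ū is the unique solution of this problem if and only if for every u ∈ N(A) with u ≠ 0, Σ_{i∈Λ} |(Bu)_i| > Σ_{i∈Λᶜ} (Bu)_i · sign((Bū)_i). -/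
open Finset Matrix

private lemma abs_add_sign_le' (a t : ℝ) : |a| + t * Real.sign a ≤ |a + t| := by
  rcases lt_trichotomy a 0 with h|h|h
  · rw [Real.sign_of_neg h, abs_of_neg h]
    nlinarith [neg_abs_le (a+t)]
  · simp [h]
  · rw [Real.sign_of_pos h, abs_of_pos h]
    nlinarith [le_abs_self (a+t)]

private lemma abs_add_eq_of_lt' (a t : ℝ) (ht : |t| < |a|) :
    |a + t| = |a| + t * Real.sign a := by
  have h1 := abs_lt.mp ht
  rcases lt_trichotomy a 0 with h|h|h
  · have hneg : a + t < 0 := by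
      have := h1.2; rw [abs_of_neg h] at this; linarith
    rw [abs_of_neg hneg, abs_of_neg h, Real.sign_of_neg h]; ring
  · subst h; simp at ht; linarith [abs_nonneg t]
  · have hpos' : 0 < a + t := by
      have := h1.1; rw [abs_of_pos h] at this; linarith
    rw [abs_of_pos hpos', abs_of_pos h, Real.sign_of_pos h]; ring

private lemma mulVec_sub_smul' {m n : ℕ} (B : Matrix (Fin m) (Fin n) ℝ) (x y : Fin n → ℝ)
    (c : ℝ) (j : Fin m) :
    B.mulVec (fun i => x i - c * y i) j = B.mulVec x j - c * B.mulVec y j := by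
  simp [Matrix.mulVec, dotProduct, mul_sub, Finset.sum_sub_distrib, Finset.mul_sum,
    mul_left_comm]

/-- Nullspace uniqueness condition: a strictly positive solution `ū` of
`min ‖Bu‖₁ s.t. Au = b, u ≥ 0` with cosupport `Λ` is the unique solution iff for every
nonzero `u ∈ N(A)` one has `∑_{i∈Λ} |(Bu)ᵢ| > ∑_{i∈Λᶜ} (Bu)ᵢ · sign((Bū)ᵢ)`. -/
theorem stmt_18 (m n p : ℕ) (A : Matrix (Fin m) (Fin n) ℝ) (B : Matrix (Fin p) (Fin n) ℝ)
    (b : Fin m → ℝ) (ubar : Fin n → ℝ)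
    (hA : A.mulVec ubar = b) (hpos : ∀ i, 0 < ubar i)
    (hopt : ∀ u : Fin n → ℝ, A.mulVec u = b → (∀ i, 0 ≤ u i) →
      (∑ i, |B.mulVec ubar i|) ≤ ∑ i, |B.mulVec u i|) :
    (∀ u : Fin n → ℝ, A.mulVec u = b → (∀ i, 0 ≤ u i) →
        (∑ i, |B.mulVec u i|) ≤ (∑ i, |B.mulVec ubar i|) → u = ubar) ↔
    (∀ u : Fin n → ℝ, A.mulVec u = 0 → u ≠ 0 →
        (∑ i ∈ Finset.univ.filter (fun r => B.mulVec ubar r = 0), |B.mulVec u i|) >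
        ∑ i ∈ Finset.univ.filter (fun r => B.mulVec ubar r ≠ 0),
          B.mulVec u i * Real.sign (B.mulVec ubar i)) := by
  classical
  set v := B.mulVec ubar with hv
  have hsplit : ∀ f : Fin p → ℝ, (∑ i, f i) =
      (∑ i ∈ Finset.univ.filter (fun r => v r = 0), f i) +
      ∑ i ∈ Finset.univ.filter (fun r => v r ≠ 0), f i := by
    intro f
    exact (Finset.sum_filter_add_sum_filter_not univ (fun r => v r = 0) f).symm
  have hvz : (∑ i ∈ Finset.univ.filter (fun r => v r = 0), |v i|) = 0 := by
    apply Finset.sum_eq_zero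
    intro i hi
    rw [(Finset.mem_filter.mp hi).2]
    simp
  constructor
  · intro huniq u hu hne
    set Bu := B.mulVec u with hBu
    -- choose small t > 0
    set f : Fin n → ℝ := fun i => ubar i / (|u i| + 1) with hf
    set g : Fin p → ℝ := fun i => if v i = 0 then 1 else |v i| / (|Bu i| + 1) with hg
    set T : Finset ℝ := insert 1 (univ.image f ∪ univ.image g) with hT
    have hTne : T.Nonempty := ⟨1, mem_insert_self _ _⟩
    set t : ℝ := T.min' hTne with htdef
    have ht0 : 0 < t := by
      rw [htdef, Finset.lt_min'_iff]
      intro x hx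
      simp only [hT, mem_insert, mem_union, mem_image, mem_univ, true_and] at hx
      rcases hx with rfl | ⟨i, rfl⟩ | ⟨i, rfl⟩
      · norm_num
      · have : (0:ℝ) < |u i| + 1 := by positivity
        exact div_pos (hpos i) this
      · simp only [hg]
        split_ifs with h
        · norm_num
        · exact div_pos (abs_pos.mpr h) (by positivity)
    have htu : ∀ i, t * |u i| < ubar i := by
      intro i
      have hfi : f i ∈ T := by
        simp only [hT, mem_insert, mem_union, mem_image, mem_univ, true_and]
        exact Or.inr (Or.inl ⟨i, rfl⟩)
      have h := Finset.min'_le T (f i) hfi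
      rw [← htdef] at h
      have hp : (0:ℝ) < |u i| + 1 := by positivity
      rw [hf, le_div_iff₀ hp] at h
      nlinarith
    have htv : ∀ i, v i ≠ 0 → t * |Bu i| < |v i| := by
      intro i hvi
      have hgi : g i ∈ T := by
        simp only [hT, mem_insert, mem_union, mem_image, mem_univ, true_and]
        exact Or.inr (Or.inr ⟨i, rfl⟩)
      have h := Finset.min'_le T (g i) hgi
      rw [← htdef] at h
      simp only [hg, if_neg hvi] at h
      have hp : (0:ℝ) < |Bu i| + 1 := by positivity
      rw [le_div_iff₀ hp] at h
      nlinarith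
    set w : Fin n → ℝ := fun i => ubar i - t * u i with hw
    have hBw : ∀ j, B.mulVec w j = v j - t * Bu j := by
      intro j; rw [hw]; exact mulVec_sub_smul' B ubar u t j
    have hAw : A.mulVec w = b := by
      funext j
      rw [hw, mulVec_sub_smul' A ubar u t j, hA, hu]
      simp
    have hwpos : ∀ i, 0 ≤ w i := by
      intro i
      have h1 := htu i
      have h2 := le_abs_self (u i)
      have h3 : t * u i ≤ t * |u i| := by nlinarith
      simp only [hw]
      linarith
    have hwne : w ≠ ubar := by
      intro h
      apply hne
      funext i
      have := congrFun h i
      simp only [hw] at this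
      have : t * u i = 0 := by linarith
      have := (mul_eq_zero.mp this).resolve_left (ne_of_gt ht0)
      simpa using this
    have hlt : (∑ i, |v i|) < ∑ i, |B.mulVec w i| := by
      by_contra hle
      exact hwne (huniq w hAw hwpos (not_lt.mp hle))
    -- compute the sums
    have h1 : (∑ i ∈ Finset.univ.filter (fun r => v r = 0), |B.mulVec w i|) =
        t * ∑ i ∈ Finset.univ.filter (fun r => v r = 0), |Bu i| := by
      rw [Finset.mul_sum]
      apply Finset.sum_congr rfl
      intro i hi
      rw [hBw i, (Finset.mem_filter.mp hi).2, zero_sub, abs_neg, abs_mul, abs_of_pos ht0]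
    have h2 : (∑ i ∈ Finset.univ.filter (fun r => v r ≠ 0), |B.mulVec w i|) =
        (∑ i ∈ Finset.univ.filter (fun r => v r ≠ 0), |v i|) -
        t * ∑ i ∈ Finset.univ.filter (fun r => v r ≠ 0), Bu i * Real.sign (v i) := by
      rw [Finset.mul_sum, ← Finset.sum_sub_distrib]
      apply Finset.sum_congr rfl
      intro i hi
      have hvi := (Finset.mem_filter.mp hi).2
      have hbound : |-(t * Bu i)| < |v i| := by
        rw [abs_neg, abs_mul, abs_of_pos ht0]
        exact htv i hvi
      have := abs_add_eq_of_lt' (v i) (-(t * Bu i)) hbound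
      rw [hBw i, sub_eq_add_neg, this]
      ring
    rw [hsplit (fun i => |v i|), hsplit (fun i => |B.mulVec w i|), hvz, h1, h2] at hlt
    have : t * (∑ i ∈ Finset.univ.filter (fun r => v r ≠ 0), Bu i * Real.sign (v i)) <
        t * ∑ i ∈ Finset.univ.filter (fun r => v r = 0), |Bu i| := by linarith
    exact lt_of_mul_lt_mul_left (by linarith) (le_of_lt ht0)
  · intro hcond u hu hupos hle
    by_contra hne
    set w : Fin n → ℝ := fun i => ubar i - u i with hw
    have hBw : ∀ j, B.mulVec w j = v j - B.mulVec u j := by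
      intro j
      have := mulVec_sub_smul' B ubar u 1 j
      simp only [one_mul] at this
      rw [hw]
      convert this using 2
    have hAw : A.mulVec w = 0 := by
      funext j
      have := mulVec_sub_smul' A ubar u 1 j
      simp only [one_mul] at this
      rw [hw, this, hA, hu]
      simp
    have hwne : w ≠ 0 := by
      intro h
      apply hne
      funext i
      have := congrFun h i
      simp only [hw, Pi.zero_apply] at this
      linarith
    have hkey := hcond w hAw hwne
    have hBWu : ∀ j, B.mulVec u j = v j + -(B.mulVec w j) := by
      intro j; rw [hBw j]; ring
    have hge : (∑ i, |v i|) < ∑ i, |B.mulVec u i| := by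
      rw [hsplit (fun i => |v i|), hsplit (fun i => |B.mulVec u i|), hvz]
      have hA1 : (∑ i ∈ Finset.univ.filter (fun r => v r = 0), |B.mulVec w i|) ≤
          ∑ i ∈ Finset.univ.filter (fun r => v r = 0), |B.mulVec u i| := by
        apply Finset.sum_le_sum
        intro i hi
        rw [hBWu i, (Finset.mem_filter.mp hi).2, zero_add, abs_neg]
      have hA2 : (∑ i ∈ Finset.univ.filter (fun r => v r ≠ 0),
            (|v i| + -(B.mulVec w i) * Real.sign (v i))) ≤
          ∑ i ∈ Finset.univ.filter (fun r => v r ≠ 0), |B.mulVec u i| := by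
        apply Finset.sum_le_sum
        intro i hi
        rw [hBWu i]
        exact abs_add_sign_le' (v i) (-(B.mulVec w i))
      have hexp : (∑ i ∈ Finset.univ.filter (fun r => v r ≠ 0),
            (|v i| + -(B.mulVec w i) * Real.sign (v i))) =
          (∑ i ∈ Finset.univ.filter (fun r => v r ≠ 0), |v i|) -
          ∑ i ∈ Finset.univ.filter (fun r => v r ≠ 0), B.mulVec w i * Real.sign (v i) := by
        rw [← Finset.sum_sub_distrib]
        apply Finset.sum_congr rfl
        intro i _
        ring
      rw [hexp] at hA2
      linarith
    linarith [hle, hge]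
end
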